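/- Let (ξ_k) be defined by ξ₀ = 1, ξ₁ = d₁, ξ_k = d_k ξ_{k−1} − γ₂² ξ_{k−2} for k ≥ 2, where d₁ = γ₀+γ₂+1 and d_k = γ₀+2k−1 for k ≥ 2, with γ₀ > 0, γ₀ ≥ 2|γ₂|, and γ₀+γ₂+1 > 0. Then ξ_k > 0 for all k ≥ 0; in particular the leading principal minors of the tridiagonal matrix A_N are all positive, so A_N is positive definite. -/

import Mathlib

theorem stmt_10 (γ₀ γ₂ : ℝ) (h0 : 0 < γ₀) (h2 : 2 * |γ₂| ≤ γ₀) (h1 : 0 < γ₀ + γ₂ + 1)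
    (ξ : ℕ → ℝ) (hξ0 : ξ 0 = 1) (hξ1 : ξ 1 = γ₀ + γ₂ + 1)
    (hrec : ∀ k : ℕ, 2 ≤ k → ξ k = (γ₀ + 2 * k - 1) * ξ (k - 1) - γ₂ ^ 2 * ξ (k - 2)) :
    (∀ k : ℕ, 0 < ξ k) ∧
    ∀ N : ℕ, 0 < N →
      (Matrix.of fun i j : Fin N =>
        if i = j then (if (i : ℕ) = 0 then γ₀ + γ₂ + 1 else γ₀ + 2 * (i : ℕ) + 1)
        else if (i : ℕ) + 1 = (j : ℕ) ∨ (j : ℕ) + 1 = (i : ℕ) then γ₂ else 0).PosDef := by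
  have habs : 0 ≤ |γ₂| := abs_nonneg _
  have hle : γ₂ ≤ |γ₂| := le_abs_self _
  have hge : -|γ₂| ≤ γ₂ := neg_abs_le _
  -- Part 1
  have key : ∀ k : ℕ, 0 < ξ k ∧ 0 < ξ (k + 1) ∧ |γ₂| * ξ k ≤ ξ (k + 1) := by
    intro k
    induction k with
    | zero =>
      refine ⟨by rw [hξ0]; norm_num, by rw [hξ1]; linarith, ?_⟩
      rw [hξ0, hξ1]; nlinarith
    | succ k ih =>
      obtain ⟨hk1, hk2, hk3⟩ := ih
      have hr := hrec (k + 2) (by omega)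
      have h21 : k + 2 - 1 = k + 1 := rfl
      have h22 : k + 2 - 2 = k := rfl
      rw [h21, h22] at hr
      have hcast : ((k : ℝ)) ≥ 0 := Nat.cast_nonneg k
      have hd : 2 * |γ₂| + 3 ≤ γ₀ + 2 * ((k : ℝ) + 2) - 1 := by nlinarith
      have hpush : (((k + 2 : ℕ) : ℝ)) = (k : ℝ) + 2 := by push_cast; ring
      rw [hpush] at hr
      have hsq : γ₂ ^ 2 = |γ₂| * |γ₂| := by rw [← sq_abs]; ring
      have hstep : γ₂ ^ 2 * ξ k ≤ |γ₂| * ξ (k + 1) := by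
        rw [hsq, mul_assoc]
        exact mul_le_mul_of_nonneg_left hk3 habs
      have hpos : 0 < ξ (k + 2) := by nlinarith
      exact ⟨hk2, hpos, by nlinarith⟩
  refine ⟨fun k => (key k).1, ?_⟩
  intro N hN
  set M : Matrix (Fin N) (Fin N) ℝ :=
    Matrix.of fun i j : Fin N =>
      if i = j then (if (i : ℕ) = 0 then γ₀ + γ₂ + 1 else γ₀ + 2 * (i : ℕ) + 1)
      else if (i : ℕ) + 1 = (j : ℕ) ∨ (j : ℕ) + 1 = (i : ℕ) then γ₂ else 0 with hM
  rw [Matrix.posDef_iff_dotProduct_mulVec]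
  constructor
  · -- Hermitian
    ext i j
    simp only [hM, Matrix.conjTranspose_apply, Matrix.of_apply, star_trivial]
    by_cases h : i = j
    · subst h; simp
    · rw [if_neg h, if_neg (Ne.symm h)]; exact if_congr or_comm rfl rfl
  · intro x hx
    have hterm : ∀ i j : Fin N,
        (if i = j then (if (i : ℕ) = 0 then γ₀ + γ₂ + 1 else γ₀ + 2 * (i : ℕ) + 1)
          else if (i : ℕ) + 1 = (j : ℕ) ∨ (j : ℕ) + 1 = (i : ℕ) then γ₂ else 0) * x j * x i ≥
        (if i = j then (if (i : ℕ) = 0 then γ₀ + γ₂ + 1 else γ₀ + 2 * (i : ℕ) + 1) * x i ^ 2 else 0)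
        + (if (i : ℕ) + 1 = (j : ℕ) ∨ (j : ℕ) + 1 = (i : ℕ)
            then -(|γ₂| / 2) * (x i ^ 2 + x j ^ 2) else 0) := by
      intro i j
      by_cases h : i = j
      · subst h
        rw [if_pos rfl, if_pos rfl, if_neg (by omega : ¬((i:ℕ)+1 = (i:ℕ) ∨ (i:ℕ)+1 = (i:ℕ)))]
        ring_nf; nlinarith [sq_nonneg (x i)]
      · rw [if_neg h, if_neg h]
        by_cases hadj : (i : ℕ) + 1 = (j : ℕ) ∨ (j : ℕ) + 1 = (i : ℕ)
        · rw [if_pos hadj, if_pos hadj]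
          nlinarith [mul_nonneg (by linarith : (0:ℝ) ≤ |γ₂| + γ₂) (sq_nonneg (x i + x j)),
            mul_nonneg (by linarith : (0:ℝ) ≤ |γ₂| - γ₂) (sq_nonneg (x i - x j))]
        · rw [if_neg hadj, if_neg hadj]; simp
    -- rewrite the dot product as a double sum
    have hdot : dotProduct (star x) (Matrix.mulVec M x) =
        ∑ i : Fin N, ∑ j : Fin N,
          (if i = j then (if (i : ℕ) = 0 then γ₀ + γ₂ + 1 else γ₀ + 2 * (i : ℕ) + 1)
            else if (i : ℕ) + 1 = (j : ℕ) ∨ (j : ℕ) + 1 = (i : ℕ) then γ₂ else 0) * x j * x i := by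
      simp only [dotProduct, Matrix.mulVec, Pi.star_apply, star_trivial, hM,
        Matrix.of_apply, Finset.mul_sum]
      exact Finset.sum_congr rfl fun i _ => Finset.sum_congr rfl fun j _ => by ring
    set T : ℝ := ∑ i : Fin N, ∑ j : Fin N,
        (if (i : ℕ) + 1 = (j : ℕ) ∨ (j : ℕ) + 1 = (i : ℕ) then x i ^ 2 else 0) with hT
    set Dsum : ℝ := ∑ i : Fin N,
        (if (i : ℕ) = 0 then γ₀ + γ₂ + 1 else γ₀ + 2 * (i : ℕ) + 1) * x i ^ 2 with hDsum
    -- main lower bound for the dot product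
    have hmain : Dsum - |γ₂| * T ≤ dotProduct (star x) (Matrix.mulVec M x) := by
      rw [hdot]
      have step1 : ∑ i : Fin N, ∑ j : Fin N,
          ((if i = j then (if (i : ℕ) = 0 then γ₀ + γ₂ + 1 else γ₀ + 2 * (i : ℕ) + 1) * x i ^ 2
              else 0)
            + (if (i : ℕ) + 1 = (j : ℕ) ∨ (j : ℕ) + 1 = (i : ℕ)
                then -(|γ₂| / 2) * (x i ^ 2 + x j ^ 2) else 0)) ≤
          ∑ i : Fin N, ∑ j : Fin N,
          (if i = j then (if (i : ℕ) = 0 then γ₀ + γ₂ + 1 else γ₀ + 2 * (i : ℕ) + 1)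
            else if (i : ℕ) + 1 = (j : ℕ) ∨ (j : ℕ) + 1 = (i : ℕ) then γ₂ else 0) * x j * x i :=
        Finset.sum_le_sum fun i _ => Finset.sum_le_sum fun j _ => hterm i j
      refine le_trans (le_of_eq ?_) step1
      have hdiag : ∀ i : Fin N, ∑ j : Fin N,
          (if i = j then (if (i : ℕ) = 0 then γ₀ + γ₂ + 1 else γ₀ + 2 * (i : ℕ) + 1) * x i ^ 2
            else 0) =
          (if (i : ℕ) = 0 then γ₀ + γ₂ + 1 else γ₀ + 2 * (i : ℕ) + 1) * x i ^ 2 := by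
        intro i; rw [Finset.sum_ite_eq]; simp
      have hTT : ∑ i : Fin N, ∑ j : Fin N,
          (if (i : ℕ) + 1 = (j : ℕ) ∨ (j : ℕ) + 1 = (i : ℕ) then x j ^ 2 else 0) = T := by
        rw [hT, Finset.sum_comm]
        exact Finset.sum_congr rfl fun j _ => Finset.sum_congr rfl fun i _ =>
          if_congr or_comm rfl rfl
      have hadjsplit : ∀ i j : Fin N,
          (if (i : ℕ) + 1 = (j : ℕ) ∨ (j : ℕ) + 1 = (i : ℕ)
            then -(|γ₂| / 2) * (x i ^ 2 + x j ^ 2) else 0) =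
          -(|γ₂| / 2) * (if (i : ℕ) + 1 = (j : ℕ) ∨ (j : ℕ) + 1 = (i : ℕ) then x i ^ 2 else 0)
          + -(|γ₂| / 2) * (if (i : ℕ) + 1 = (j : ℕ) ∨ (j : ℕ) + 1 = (i : ℕ) then x j ^ 2 else 0) := by
        intro i j; split <;> ring
      have e1 : (∑ i : Fin N, ∑ j : Fin N,
          -(|γ₂| / 2) * (if (i : ℕ) + 1 = (j : ℕ) ∨ (j : ℕ) + 1 = (i : ℕ) then x i ^ 2 else 0)) =
          -(|γ₂| / 2) * T := by
        rw [hT]; simp only [Finset.mul_sum]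
      have e2 : (∑ i : Fin N, ∑ j : Fin N,
          -(|γ₂| / 2) * (if (i : ℕ) + 1 = (j : ℕ) ∨ (j : ℕ) + 1 = (i : ℕ) then x j ^ 2 else 0)) =
          -(|γ₂| / 2) * T := by
        rw [← hTT]; simp only [Finset.mul_sum]
      symm
      calc ∑ i : Fin N, ∑ j : Fin N,
            ((if i = j then (if (i : ℕ) = 0 then γ₀ + γ₂ + 1 else γ₀ + 2 * (i : ℕ) + 1) * x i ^ 2
                else 0)
              + (if (i : ℕ) + 1 = (j : ℕ) ∨ (j : ℕ) + 1 = (i : ℕ)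
                  then -(|γ₂| / 2) * (x i ^ 2 + x j ^ 2) else 0))
          = ∑ i : Fin N, ∑ j : Fin N,
            ((if i = j then (if (i : ℕ) = 0 then γ₀ + γ₂ + 1 else γ₀ + 2 * (i : ℕ) + 1) * x i ^ 2
                else 0)
              + (-(|γ₂| / 2) * (if (i : ℕ) + 1 = (j : ℕ) ∨ (j : ℕ) + 1 = (i : ℕ) then x i ^ 2 else 0)
              + -(|γ₂| / 2) * (if (i : ℕ) + 1 = (j : ℕ) ∨ (j : ℕ) + 1 = (i : ℕ) then x j ^ 2 else 0))) :=
            Finset.sum_congr rfl fun i _ => Finset.sum_congr rfl fun j _ => by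
              rw [hadjsplit i j]
        _ = (∑ i : Fin N, ∑ j : Fin N,
              (if i = j then (if (i : ℕ) = 0 then γ₀ + γ₂ + 1 else γ₀ + 2 * (i : ℕ) + 1) * x i ^ 2
                else 0))
            + ((∑ i : Fin N, ∑ j : Fin N,
              -(|γ₂| / 2) * (if (i : ℕ) + 1 = (j : ℕ) ∨ (j : ℕ) + 1 = (i : ℕ) then x i ^ 2 else 0))
            + (∑ i : Fin N, ∑ j : Fin N,
              -(|γ₂| / 2) * (if (i : ℕ) + 1 = (j : ℕ) ∨ (j : ℕ) + 1 = (i : ℕ) then x j ^ 2 else 0))) := by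
            simp only [Finset.sum_add_distrib]
        _ = Dsum + (-(|γ₂| / 2) * T + -(|γ₂| / 2) * T) := by
            rw [e1, e2, hDsum]
            congr 1
            exact Finset.sum_congr rfl fun i _ => hdiag i
        _ = Dsum - |γ₂| * T := by ring
    -- bound T
    have hTbound : T ≤ ∑ i : Fin N, (x i ^ 2 + (if (i : ℕ) = 0 then 0 else x i ^ 2)) := by
      rw [hT]
      refine Finset.sum_le_sum fun i _ => ?_
      have hsplit : ∀ j : Fin N,
          (if (i : ℕ) + 1 = (j : ℕ) ∨ (j : ℕ) + 1 = (i : ℕ) then x i ^ 2 else 0) =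
          (if (i : ℕ) + 1 = (j : ℕ) then x i ^ 2 else 0)
          + (if (j : ℕ) + 1 = (i : ℕ) then x i ^ 2 else 0) := by
        intro j
        by_cases hP : (i : ℕ) + 1 = (j : ℕ) <;> by_cases hQ : (j : ℕ) + 1 = (i : ℕ) <;>
          simp [hP, hQ] <;> omega
      rw [Finset.sum_congr rfl fun j _ => hsplit j, Finset.sum_add_distrib]
      have hT1 : (∑ j : Fin N, if (i : ℕ) + 1 = (j : ℕ) then x i ^ 2 else 0) ≤ x i ^ 2 := by
        by_cases h : (i : ℕ) + 1 < N
        · have heq : ∀ j : Fin N, ((i : ℕ) + 1 = (j : ℕ)) ↔ (j = ⟨(i : ℕ) + 1, h⟩) := by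
            intro j
            constructor
            · intro hj; exact Fin.ext (by simpa using hj.symm)
            · intro hj; subst hj; rfl
          rw [Finset.sum_congr rfl fun j _ => if_congr (heq j) rfl rfl, Finset.sum_ite_eq']
          simp
        · rw [Finset.sum_eq_zero fun j _ => if_neg (by have := j.isLt; omega)]
          positivity
      have hT2 : (∑ j : Fin N, if (j : ℕ) + 1 = (i : ℕ) then x i ^ 2 else 0) ≤
          (if (i : ℕ) = 0 then 0 else x i ^ 2) := by
        by_cases h0 : (i : ℕ) = 0
        · rw [if_pos h0, Finset.sum_eq_zero fun j _ => if_neg (by omega)]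
        · rw [if_neg h0]
          have h : (i : ℕ) - 1 < N := by have := i.isLt; omega
          have heq : ∀ j : Fin N, ((j : ℕ) + 1 = (i : ℕ)) ↔ (j = ⟨(i : ℕ) - 1, h⟩) := by
            intro j
            constructor
            · intro hj; exact Fin.ext (by simp; omega)
            · intro hj; subst hj; simp; omega
          rw [Finset.sum_congr rfl fun j _ => if_congr (heq j) rfl rfl, Finset.sum_ite_eq']
          simp
      linarith
    -- conclude
    have hxsq : 0 < ∑ i : Fin N, x i ^ 2 := by
      obtain ⟨i, hi⟩ := Function.ne_iff.mp hx
      refine Finset.sum_pos' (fun j _ => sq_nonneg _) ⟨i, Finset.mem_univ i, ?_⟩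
      exact sq_pos_of_ne_zero (by simpa using hi)
    have hfin : ∑ i : Fin N, x i ^ 2 ≤
        Dsum - |γ₂| * ∑ i : Fin N, (x i ^ 2 + (if (i : ℕ) = 0 then 0 else x i ^ 2)) := by
      rw [hDsum, Finset.mul_sum, ← Finset.sum_sub_distrib]
      refine Finset.sum_le_sum fun i _ => ?_
      by_cases h0 : (i : ℕ) = 0
      · rw [if_pos h0, if_pos h0]
        nlinarith [sq_nonneg (x i)]
      · rw [if_neg h0, if_neg h0]
        have hc : (0 : ℝ) ≤ (i : ℕ) := Nat.cast_nonneg _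
        nlinarith [sq_nonneg (x i)]
    have hmul : |γ₂| * T ≤ |γ₂| * ∑ i : Fin N, (x i ^ 2 + (if (i : ℕ) = 0 then 0 else x i ^ 2)) :=
      mul_le_mul_of_nonneg_left hTbound habs
    calc (0 : ℝ) < ∑ i : Fin N, x i ^ 2 := hxsq
      _ ≤ Dsum - |γ₂| * ∑ i : Fin N, (x i ^ 2 + (if (i : ℕ) = 0 then 0 else x i ^ 2)) := hfin
      _ ≤ Dsum - |γ₂| * T := by linarith
      _ ≤ dotProduct (star x) (Matrix.mulVec M x) := hmain
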